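/- arXiv:2109.08015 — 2 statements merged into one kernel-verified Lean document; each statement's English description precedes it below -/
import Mathlib

section
/- Let Λ be a finite dimensional k-algebra and V a finitely generated left Λ-module. For every i ≥ 1 there is a finitely generated projective left Λ-module T'_i and an isomorphism of left Λ-modules Ω^i_{Λᵉ}Λ ⊗_Λ V ≅ Ω^i_Λ V ⊕ T'_i, where Ω^i_Λ V is the i-th syzygy of V with respect to projective covers. -/
/- STATEMENT 7: Let Λ be a finite dimensional k-algebra and V a finitely generated left
Λ-module. For every i ≥ 1 there is a finitely generated projective left Λ-module T'_i and
an isomorphism of left Λ-modules Ω^i_{Λᵉ}Λ ⊗_Λ V ≅ Ω^i_Λ V ⊕ T'_i, where Ω^i_Λ V is the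
i-th syzygy of V with respect to projective covers and Ω^i_{Λᵉ}Λ is the i-th syzygy of Λ
as a bimodule (module over Λᵉ = Λ ⊗_k Λᵐᵒᵖ). -/

universe u
open CategoryTheory TensorProduct

/-- `f : P → V` is a projective cover: `P` is projective, `f` is surjective, and the
kernel of `f` is superfluous (small) in `P`. -/
structure IsProjectiveCover (A : Type u) [Ring A] {P V : Type u} [AddCommGroup P] [Module A P]
    [AddCommGroup V] [Module A V] (f : P →ₗ[A] V) : Prop where
  projective : Module.Projective A P
  surjective : Function.Surjective f
  superfluous : ∀ N : Submodule A P, N ⊔ LinearMap.ker f = ⊤ → N = ⊤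
/-- `W` is (isomorphic to) a first syzygy of `N` over `A`: the kernel of a projective
cover of `N`. -/
def IsFirstSyzygy (A : Type u) [Ring A] (W N : ModuleCat.{u} A) : Prop :=
  ∃ (P : ModuleCat.{u} A) (f : P →ₗ[A] N), Module.Finite A P ∧ IsProjectiveCover A f ∧
    Nonempty (W ≃ₗ[A] ↥(LinearMap.ker f))

/-- `W` is (isomorphic to) the `n`-th syzygy `Ω^n_A N` of `N` over `A`, taken with
respect to projective covers. -/
def IsNthSyzygy (A : Type u) [Ring A] : ℕ → ModuleCat.{u} A → ModuleCat.{u} A → Prop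
  | 0 => fun W N => Nonempty (W ≃ₗ[A] N)
  | n + 1 => fun W N => ∃ K : ModuleCat.{u} A, IsNthSyzygy A n K N ∧ IsFirstSyzygy A W K
/-- `(W, b)` is a tensor product of the right `Λ`-module `X` and the left `Λ`-module `Y`
over `Λ`: `b` is biadditive and `Λ`-balanced, and universal among such maps into abelian
groups. -/
structure IsTensor (Λ : Type u) [Ring Λ]
    (X : Type u) [AddCommGroup X] [Module Λᵐᵒᵖ X]
    (Y : Type u) [AddCommGroup Y] [Module Λ Y]
    (W : Type u) [AddCommGroup W] (b : X → Y → W) : Prop where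
  add_left : ∀ x x' y, b (x + x') y = b x y + b x' y
  add_right : ∀ x y y', b x (y + y') = b x y + b x y'
  balanced : ∀ x (a : Λ) y, b (MulOpposite.op a • x) y = b x (a • y)
  universal : ∀ (T : Type u) [AddCommGroup T] (c : X → Y → T),
      (∀ x x' y, c (x + x') y = c x y + c x' y) →
      (∀ x y y', c x (y + y') = c x y + c x y') →
      (∀ x (a : Λ) y, c (MulOpposite.op a • x) y = c x (a • y)) →
      ∃! f : W →+ T, ∀ x y, f (b x y) = c x y


namespace BimodAux


variable {Λ : Type u} [Ring Λ]

section Cover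

variable {Q C R T : Type u} [AddCommGroup Q] [Module Λ Q] [AddCommGroup C] [Module Λ C]
  [AddCommGroup R] [Module Λ R] [AddCommGroup T] [Module Λ T]

/-- A superfluous kernel stays superfluous after crossing with the identity. -/
lemma smallProdLeft (g : R →ₗ[Λ] C) (hg : ∀ N : Submodule Λ R, N ⊔ LinearMap.ker g = ⊤ → N = ⊤)
    (N : Submodule Λ (R × T))
    (hN : N ⊔ LinearMap.ker (g.prodMap (LinearMap.id : T →ₗ[Λ] T)) = ⊤) : N = ⊤ := by
  have hker : LinearMap.ker (g.prodMap (LinearMap.id : T →ₗ[Λ] T)) =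
      (LinearMap.ker g).prod ⊥ := by
    rw [LinearMap.ker_prodMap, LinearMap.ker_id]
  rw [hker] at hN
  have hN' : (N.comap (LinearMap.inl Λ R T)) ⊔ LinearMap.ker g = ⊤ := by
    rw [Submodule.eq_top_iff']
    intro r
    have : ((r, 0) : R × T) ∈ N ⊔ (LinearMap.ker g).prod ⊥ := by rw [hN]; trivial
    rcases Submodule.mem_sup.1 this with ⟨n, hn, p, hp, hnp⟩
    have hp2 : p.2 = 0 := by simpa using hp.2
    have hn2 : n = (r - p.1, 0) := by
      have : n = (r, 0) - p := by rw [← hnp]; abel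
      rw [this, Prod.ext_iff]; constructor <;> simp [hp2]
    refine Submodule.mem_sup.2 ⟨r - p.1, ?_, p.1, hp.1, by abel⟩
    · show ((r - p.1, 0) : R × T) ∈ N
      rwa [← hn2]
  have hNtop := hg _ hN'
  rw [Submodule.eq_top_iff']
  intro x
  have : ((x.1, 0) : R × T) ∈ N ⊔ (LinearMap.ker g).prod ⊥ := by rw [hN]; trivial
  rcases Submodule.mem_sup.1 this with ⟨n, hn, p, hp, hnp⟩
  have hx2 : ((x.1 - p.1, 0) : R × T) ∈ N := by
    have : n = (x.1 - p.1, 0) := by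
      have : n = (x.1, 0) - p := by rw [← hnp]; abel
      rw [this, Prod.ext_iff]; constructor <;> simp [show p.2 = 0 by simpa using hp.2]
    rwa [← this]
  have hp1 : ((p.1, 0) : R × T) ∈ N := by
    have : p.1 ∈ N.comap (LinearMap.inl Λ R T) := by rw [hNtop]; trivial
    simpa using this
  have hx1 : ((x.1, 0) : R × T) ∈ N := by
    have := N.add_mem hx2 hp1
    simpa using this
  have hxt : ((0, x.2) : R × T) ∈ N := by
    have : ((0, x.2) : R × T) ∈ N ⊔ (LinearMap.ker g).prod ⊥ := by rw [hN]; trivial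
    rcases Submodule.mem_sup.1 this with ⟨n, hn, p, hp, hnp⟩
    have hn' : n = (-p.1, x.2) := by
      have : n = (0, x.2) - p := by rw [← hnp]; abel
      rw [this, Prod.ext_iff]; constructor <;> simp [show p.2 = 0 by simpa using hp.2]
    have hmp : ((-p.1, 0) : R × T) ∈ N := by
      have h0 : (-p.1) ∈ N.comap (LinearMap.inl Λ R T) := by rw [hNtop]; trivial
      have h1 : (LinearMap.inl Λ R T) (-p.1) ∈ N := Submodule.mem_comap.1 h0
      simpa only [LinearMap.inl_apply] using h1
    have := N.sub_mem (by rwa [← hn'] : ((-p.1, x.2) : R × T) ∈ N) hmp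
    simpa using this
  have := N.add_mem hx1 hxt
  simpa using this

lemma coverProd (g : R →ₗ[Λ] C) (hg : IsProjectiveCover Λ g) (hT : Module.Projective Λ T) :
    IsProjectiveCover Λ (g.prodMap (LinearMap.id : T →ₗ[Λ] T)) := by
  haveI := hg.projective
  refine ⟨inferInstance, ?_, smallProdLeft g hg.superfluous⟩
  intro ⟨c, t⟩
  obtain ⟨r, hr⟩ := hg.surjective c
  exact ⟨(r, t), by simp [hr]⟩

noncomputable def kerProdIdEquiv (g : R →ₗ[Λ] C) :
    ↥(LinearMap.ker (g.prodMap (LinearMap.id : T →ₗ[Λ] T))) ≃ₗ[Λ] ↥(LinearMap.ker g) where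
  toFun x := ⟨x.1.1, by
    have := x.2
    rw [LinearMap.mem_ker] at this ⊢
    exact congrArg Prod.fst this⟩
  invFun y := ⟨(y.1, 0), by
    rw [LinearMap.mem_ker]
    have := y.2
    rw [LinearMap.mem_ker] at this
    simp [this]⟩
  left_inv x := by
    apply Subtype.ext
    have := x.2
    rw [LinearMap.mem_ker] at this
    have h2 : (x : R × T).2 = 0 := congrArg Prod.snd this
    exact Prod.ext rfl h2.symm
  right_inv y := by apply Subtype.ext; rfl
  map_add' x y := by apply Subtype.ext; rfl
  map_smul' a x := by apply Subtype.ext; rfl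

/-- Schanuel-type comparison against a projective cover: the kernel of any surjection from a
f.g. projective is the kernel of the cover plus a f.g. projective complement. -/
lemma coverCompare (p : Q →ₗ[Λ] C) (hQp : Module.Projective Λ Q) (hQf : Module.Finite Λ Q)
    (hp : Function.Surjective p) (g : R →ₗ[Λ] C) (hg : IsProjectiveCover Λ g) :
    ∃ T' : ModuleCat.{u} Λ, Module.Projective Λ T' ∧ Module.Finite Λ T' ∧
      Nonempty (↥(LinearMap.ker p) ≃ₗ[Λ] ↥(LinearMap.ker g) × T') := by
  haveI := hg.projective
  haveI := hQp
  haveI := hQf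
  obtain ⟨h, hh⟩ := Module.projective_lifting_property g p hg.surjective
  have hgh : ∀ q, g (h q) = p q := fun q => by rw [← hh]; rfl
  have hsur : Function.Surjective h := by
    have hrange : LinearMap.range h = ⊤ := by
      apply hg.superfluous
      rw [Submodule.eq_top_iff']
      intro r
      obtain ⟨q, hq⟩ := hp (g r)
      refine Submodule.mem_sup.2 ⟨h q, ⟨q, rfl⟩, r - h q, ?_, by abel⟩
      rw [LinearMap.mem_ker, map_sub, hgh, hq, sub_self]
    exact LinearMap.range_eq_top.1 hrange
  obtain ⟨σ, hσ⟩ := Module.projective_lifting_property h (LinearMap.id) hsur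
  have hσ' : ∀ r, h (σ r) = r := fun r => by
    have := congrArg (fun φ => φ r) hσ; simpa using this
  -- the complement
  have hs0mem : ∀ q : Q, q - σ (h q) ∈ LinearMap.ker h := by
    intro q; rw [LinearMap.mem_ker, map_sub, hσ', sub_self]
  let s0 : Q →ₗ[Λ] ↥(LinearMap.ker h) :=
    LinearMap.codRestrict (LinearMap.ker h) (LinearMap.id - σ ∘ₗ h) hs0mem
  have hs0 : ∀ q : Q, (s0 q : Q) = q - σ (h q) := fun _ => rfl
  have hproj : Module.Projective Λ ↥(LinearMap.ker h) := by
    refine Module.Projective.of_split (LinearMap.ker h).subtype s0 ?_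
    ext x
    show (s0 (x : Q) : Q) = (x : Q)
    rw [hs0]
    have : h (x : Q) = 0 := x.2
    rw [this, map_zero, sub_zero]
  have hfin : Module.Finite Λ ↥(LinearMap.ker h) := by
    apply Module.Finite.of_surjective s0
    intro x
    refine ⟨(x : Q), ?_⟩
    apply Subtype.ext
    rw [hs0]
    have : h (x : Q) = 0 := x.2
    rw [this, map_zero, sub_zero]
  have Eq1 : ↥(LinearMap.ker p) ≃ₗ[Λ] ↥(LinearMap.ker g) × ↥(LinearMap.ker h) :=
    { toFun := fun x => (⟨h (x : Q), by rw [LinearMap.mem_ker, hgh]; exact x.2⟩,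
        ⟨(x : Q) - σ (h (x : Q)), hs0mem _⟩)
      invFun := fun yz => ⟨σ ((yz.1 : R)) + ((yz.2 : Q)), by
        rw [LinearMap.mem_ker, map_add, ← hgh, ← hgh, hσ']
        have h1 : g (yz.1 : R) = 0 := yz.1.2
        have h2 : h (yz.2 : Q) = 0 := yz.2.2
        rw [h1, h2, map_zero, add_zero]⟩
      left_inv := fun x => by
        apply Subtype.ext
        show σ (h (x : Q)) + ((x : Q) - σ (h (x : Q))) = (x : Q)
        abel
      right_inv := fun yz => by
        have h2 : h (yz.2 : Q) = 0 := yz.2.2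
        refine Prod.ext (Subtype.ext ?_) (Subtype.ext ?_)
        · show h (σ (yz.1 : R) + (yz.2 : Q)) = (yz.1 : R)
          rw [map_add, hσ', h2, add_zero]
        · show (σ (yz.1 : R) + (yz.2 : Q)) - σ (h (σ (yz.1 : R) + (yz.2 : Q))) = (yz.2 : Q)
          rw [map_add, hσ', h2, add_zero]
          abel
      map_add' := fun x y => by
        refine Prod.ext (Subtype.ext ?_) (Subtype.ext ?_)
        · show h ((x : Q) + (y : Q)) = h (x : Q) + h (y : Q)
          rw [map_add]
        · show ((x : Q) + (y : Q)) - σ (h ((x : Q) + (y : Q))) =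
            ((x : Q) - σ (h (x : Q))) + ((y : Q) - σ (h (y : Q)))
          rw [map_add, map_add]
          abel
      map_smul' := fun a x => by
        refine Prod.ext (Subtype.ext ?_) (Subtype.ext ?_)
        · show h (a • (x : Q)) = a • h (x : Q)
          rw [map_smul]
        · show (a • (x : Q)) - σ (h (a • (x : Q))) = a • ((x : Q) - σ (h (x : Q)))
          rw [map_smul, map_smul, smul_sub] }
  exact ⟨ModuleCat.of Λ ↥(LinearMap.ker h), hproj, hfin, ⟨Eq1⟩⟩

end Cover

section Big
variable (k : Type u) [Field k] (Λ : Type u) [Ring Λ] [Algebra k Λ]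

abbrev E := Λ ⊗[k] Λᵐᵒᵖ

section RopSec

noncomputable def lop : Λ →+* E k Λ := Algebra.TensorProduct.includeLeftRingHom
noncomputable def rop : Λᵐᵒᵖ →+* E k Λ := (Algebra.TensorProduct.includeRight).toRingHom

lemma lop_apply (a : Λ) : lop k Λ a = a ⊗ₜ[k] (1 : Λᵐᵒᵖ) := rfl
lemma rop_apply (a : Λᵐᵒᵖ) : rop k Λ a = (1 : Λ) ⊗ₜ[k] a := rfl

lemma lop_rop_comm (a : Λ) (c : Λᵐᵒᵖ) : lop k Λ a * rop k Λ c = rop k Λ c * lop k Λ a := by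
  simp [lop_apply, rop_apply, Algebra.TensorProduct.tmul_mul_tmul]

/-- Type synonym: a `Λᵉ`-module viewed as a right `Λ`-module (i.e. a `Λᵐᵒᵖ`-module). -/
def Rop (_k _Λ M : Type u) : Type u := M

instance (M : Type u) [AddCommGroup M] : AddCommGroup (Rop k Λ M) :=
  inferInstanceAs (AddCommGroup M)

noncomputable instance (M : Type u) [AddCommGroup M] [Module (E k Λ) M] :
    Module Λᵐᵒᵖ (Rop k Λ M) :=
  Module.compHom M (rop k Λ)

lemma Rop.smul_def {M : Type u} [AddCommGroup M] [Module (E k Λ) M] (a : Λᵐᵒᵖ) (m : Rop k Λ M) :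
    a • m = (HSMul.hSMul (α := E k Λ) (β := M) (rop k Λ a) m : M) := rfl

variable {k Λ}
variable {M M' : Type u} [AddCommGroup M] [Module (E k Λ) M]
  [AddCommGroup M'] [Module (E k Λ) M']

/-- An `E`-linear map induces a `Λᵐᵒᵖ`-linear map on restrictions. -/
def Rop.mapL (f : M →ₗ[E k Λ] M') : Rop k Λ M →ₗ[Λᵐᵒᵖ] Rop k Λ M' where
  toFun m := (f (m : M) : Rop k Λ M')
  map_add' := f.map_add
  map_smul' a m := f.map_smul (rop k Λ a) m

lemma Rop.mapL_apply (f : M →ₗ[E k Λ] M') (m : M) : Rop.mapL f m = f m := rfl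

/-- An `E`-linear equiv induces a `Λᵐᵒᵖ`-linear equiv on restrictions. -/
noncomputable def Rop.congr (f : M ≃ₗ[E k Λ] M') : Rop k Λ M ≃ₗ[Λᵐᵒᵖ] Rop k Λ M' where
  toFun m := (f (m : M) : Rop k Λ M')
  invFun m := (f.symm (m : M') : Rop k Λ M)
  left_inv m := f.left_inv m
  right_inv m := f.right_inv m
  map_add' := f.map_add
  map_smul' a m := f.map_smul (rop k Λ a) m

section FD
variable [FiniteDimensional k Λ]

/-- `Λᵉ` is free as a right `Λ`-module. -/
noncomputable def ropEIso :
    Rop k Λ (E k Λ) ≃ₗ[Λᵐᵒᵖ] (Fin (Module.finrank k Λ) → Λᵐᵒᵖ) := by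
  classical
  set d := Module.finrank k Λ
  let bΛ : Module.Basis (Fin d) k Λ := Module.finBasis k Λ
  let B : Λ →ₗ[k] Λᵐᵒᵖ →ₗ[k] (Fin d → Λᵐᵒᵖ) :=
    LinearMap.mk₂ k (fun x y => fun j => (bΛ.repr x j) • y)
      (by intro x x' y; funext j; simp [add_smul])
      (by intro c x y; funext j; simp [mul_smul])
      (by intro x y y'; funext j; simp [smul_add])
      (by intro c x y; funext j
          show (bΛ.repr x j) • (c • y) = c • ((bΛ.repr x j) • y)
          rw [smul_comm])
  let i : E k Λ →ₗ[k] (Fin d → Λᵐᵒᵖ) := TensorProduct.lift B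
  have hi : ∀ (x : Λ) (y : Λᵐᵒᵖ), i (x ⊗ₜ[k] y) = fun j => (bΛ.repr x j) • y := by
    intro x y; rfl
  let s : (Fin d → Λᵐᵒᵖ) → E k Λ := fun g => ∑ j, bΛ j ⊗ₜ[k] g j
  have key : ∀ z : E k Λ, s (i z) = z := by
    intro z
    induction z using TensorProduct.induction_on with
    | zero =>
      rw [map_zero]
      show ∑ j, bΛ j ⊗ₜ[k] (0 : Fin d → Λᵐᵒᵖ) j = (0 : E k Λ)
      simp [TensorProduct.tmul_zero]
    | tmul x y =>
      rw [hi]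
      show ∑ j, bΛ j ⊗ₜ[k] ((bΛ.repr x j) • y) = x ⊗ₜ[k] y
      have : ∀ j, bΛ j ⊗ₜ[k] ((bΛ.repr x j) • y) = ((bΛ.repr x j) • bΛ j) ⊗ₜ[k] y := by
        intro j; rw [TensorProduct.smul_tmul]
      rw [Finset.sum_congr rfl (fun j _ => this j), ← TensorProduct.sum_tmul, Module.Basis.sum_repr]
    | add z1 z2 h1 h2 =>
      show s (i (z1 + z2)) = z1 + z2
      have : i (z1 + z2) = i z1 + i z2 := map_add i z1 z2
      rw [this]
      show ∑ j, bΛ j ⊗ₜ[k] (i z1 j + i z2 j) = z1 + z2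
      calc ∑ j, bΛ j ⊗ₜ[k] (i z1 j + i z2 j)
          = ∑ j, (bΛ j ⊗ₜ[k] i z1 j + bΛ j ⊗ₜ[k] i z2 j) := by
            refine Finset.sum_congr rfl fun j _ => ?_
            rw [TensorProduct.tmul_add]
        _ = s (i z1) + s (i z2) := Finset.sum_add_distrib
        _ = z1 + z2 := by rw [h1, h2]
  have key2 : ∀ g : Fin d → Λᵐᵒᵖ, i (s g) = g := by
    intro g
    funext t
    show i (∑ j, bΛ j ⊗ₜ[k] g j) t = g t
    rw [map_sum]
    show (∑ j, i (bΛ j ⊗ₜ[k] g j)) t = g t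
    rw [Finset.sum_apply]
    have : ∀ j, i (bΛ j ⊗ₜ[k] g j) t = if j = t then g j else 0 := by
      intro j
      rw [hi]
      show (bΛ.repr (bΛ j) t) • g j = _
      rw [Module.Basis.repr_self, Finsupp.single_apply]
      by_cases h : j = t <;> simp [h]
    rw [Finset.sum_congr rfl (fun j _ => this j), Finset.sum_ite_eq' Finset.univ t g]
    simp
  have hsmul : ∀ (a : Λᵐᵒᵖ) (z : E k Λ), i (rop k Λ a • z) = a • i z := by
    intro a z
    induction z using TensorProduct.induction_on with
    | zero => simp
    | tmul x y =>
      have h1 : rop k Λ a • (x ⊗ₜ[k] y) = x ⊗ₜ[k] (a * y) := by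
        show rop k Λ a * (x ⊗ₜ[k] y) = x ⊗ₜ[k] (a * y)
        rw [rop_apply, Algebra.TensorProduct.tmul_mul_tmul, one_mul]
      rw [h1, hi, hi]
      funext j
      show (bΛ.repr x j) • (a * y) = a • ((bΛ.repr x j) • y)
      rw [smul_eq_mul, mul_smul_comm]
    | add z1 z2 h1 h2 =>
      rw [smul_add, map_add, map_add, h1, h2, smul_add]
  exact
    { toFun := fun m => i (m : E k Λ)
      invFun := fun g => (s g : Rop k Λ (E k Λ))
      left_inv := key
      right_inv := key2
      map_add' := i.map_add
      map_smul' := fun a m => hsmul a m }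

lemma ropE_projective : Module.Projective Λᵐᵒᵖ (Rop k Λ (E k Λ)) :=
  Module.Projective.of_equiv (ropEIso (k := k) (Λ := Λ)).symm

/-- `Rop` of a finite product, as a `Λᵐᵒᵖ`-module, is the product of the `Rop`s. -/
noncomputable def ropPiIso (n : ℕ) :
    Rop k Λ (Fin n → E k Λ) ≃ₗ[Λᵐᵒᵖ] (Fin n → Rop k Λ (E k Λ)) where
  toFun f := f
  invFun f := f
  left_inv _ := rfl
  right_inv _ := rfl
  map_add' _ _ := rfl
  map_smul' _ _ := rfl

/-- A finitely generated projective `Λᵉ`-module is projective as a right `Λ`-module. -/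
lemma ropProjective_of_fgproj (P : Type u) [AddCommGroup P] [Module (E k Λ) P]
    [Module.Finite (E k Λ) P] [Module.Projective (E k Λ) P] :
    Module.Projective Λᵐᵒᵖ (Rop k Λ P) := by
  obtain ⟨n, π, hπ⟩ := Module.Finite.exists_fin' (E k Λ) P
  obtain ⟨σ, hσ⟩ := Module.projective_lifting_property π LinearMap.id hπ
  haveI hEfree : Module.Projective Λᵐᵒᵖ (Fin n → Rop k Λ (E k Λ)) := by
    have e2 : (Fin n → Rop k Λ (E k Λ)) ≃ₗ[Λᵐᵒᵖ] (Fin n → Fin (Module.finrank k Λ) → Λᵐᵒᵖ) :=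
      LinearEquiv.piCongrRight (fun _ => ropEIso)
    exact Module.Projective.of_equiv e2.symm
  haveI : Module.Projective Λᵐᵒᵖ (Rop k Λ (Fin n → E k Λ)) :=
    Module.Projective.of_equiv (ropPiIso n).symm
  refine Module.Projective.of_split (Rop.mapL σ) (Rop.mapL π) ?_
  ext x
  show π (σ x) = x
  have := congrArg (fun φ => φ x) hσ
  exact this

end FD
end RopSec

section TVSec

variable (V : Type u) [AddCommGroup V] [Module Λ V]
variable (M : Type u) [AddCommGroup M] [Module (E k Λ) M]

/-- Generators of the balancing relation for `M ⊗_Λ V`. -/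
def TVset : Set (M ⊗[ℤ] V) :=
  {z | ∃ (a : Λ) (m : M) (v : V),
    z = ((((1 : Λ) ⊗ₜ[k] MulOpposite.op a) • m) ⊗ₜ[ℤ] v) - (m ⊗ₜ[ℤ] (a • v))}

def TVrel : Submodule ℤ (M ⊗[ℤ] V) := Submodule.span ℤ (TVset k Λ V M)

/-- The balanced tensor product `M ⊗_Λ V` of the `Λᵉ`-module `M` (as right `Λ`-module)
with the left `Λ`-module `V`. -/
def TV : Type u := (M ⊗[ℤ] V) ⧸ TVrel k Λ V M

noncomputable instance : AddCommGroup (TV k Λ V M) :=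
  inferInstanceAs (AddCommGroup ((M ⊗[ℤ] V) ⧸ TVrel k Λ V M))

variable {M}

noncomputable def TV.mk (m : M) (v : V) : TV k Λ V M := Submodule.Quotient.mk (m ⊗ₜ[ℤ] v)

variable {k Λ V}

lemma TV.mk_add_left (m m' : M) (v : V) :
    TV.mk k Λ V (m + m') v = TV.mk k Λ V m v + TV.mk k Λ V m' v := by
  unfold TV.mk
  rw [TensorProduct.add_tmul, Submodule.Quotient.mk_add]; rfl

lemma TV.mk_add_right (m : M) (v v' : V) :
    TV.mk k Λ V m (v + v') = TV.mk k Λ V m v + TV.mk k Λ V m v' := by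
  unfold TV.mk
  rw [TensorProduct.tmul_add, Submodule.Quotient.mk_add]; rfl

lemma TV.mk_zero_left (v : V) : TV.mk k Λ V (0 : M) v = 0 := by
  unfold TV.mk
  rw [TensorProduct.zero_tmul, Submodule.Quotient.mk_zero]; rfl

lemma TV.mk_zero_right (m : M) : TV.mk k Λ V m (0 : V) = 0 := by
  unfold TV.mk
  rw [TensorProduct.tmul_zero, Submodule.Quotient.mk_zero]; rfl

lemma TV.mk_rel (a : Λ) (m : M) (v : V) :
    TV.mk k Λ V ((((1 : Λ) ⊗ₜ[k] MulOpposite.op a) • m)) v = TV.mk k Λ V m (a • v) := by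
  unfold TV.mk
  refine (Submodule.Quotient.eq (TVrel k Λ V M)).2 ?_
  exact Submodule.subset_span ⟨a, m, v, rfl⟩

lemma TV.ind {p : TV k Λ V M → Prop} (hmk : ∀ m v, p (TV.mk k Λ V m v))
    (hadd : ∀ x y, p x → p y → p (x + y)) : ∀ x, p x := by
  intro x
  obtain ⟨z, rfl⟩ := Submodule.Quotient.mk_surjective _ x
  induction z using TensorProduct.induction_on with
  | zero =>
    have := hmk 0 0
    rwa [TV.mk_zero_left] at this
  | tmul m v => exact hmk m v
  | add z1 z2 h1 h2 =>
    rw [Submodule.Quotient.mk_add]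
    exact hadd _ _ h1 h2

section Lift
variable {T : Type u} [AddCommGroup T]

/-- Universal property: lifting a balanced biadditive map. -/
noncomputable def TV.lift (c : M → V → T)
    (h1 : ∀ m m' v, c (m + m') v = c m v + c m' v)
    (h2 : ∀ m v v', c m (v + v') = c m v + c m v')
    (hbal : ∀ (a : Λ) m v, c (((1 : Λ) ⊗ₜ[k] MulOpposite.op a) • m) v = c m (a • v)) :
    TV k Λ V M →+ T := by
  let c1 : M →+ (V →ₗ[ℤ] T) :=
    AddMonoidHom.mk' (fun m => (AddMonoidHom.mk' (c m) (fun v v' => h2 m v v')).toIntLinearMap)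
      (by intro m m'; ext v; exact h1 m m' v)
  let c2 : M →ₗ[ℤ] (V →ₗ[ℤ] T) := c1.toIntLinearMap
  let ℓ : (M ⊗[ℤ] V) →ₗ[ℤ] T := TensorProduct.lift c2
  have hker : TVrel k Λ V M ≤ LinearMap.ker ℓ := by
    rw [TVrel, Submodule.span_le]
    rintro z ⟨a, m, v, rfl⟩
    rw [SetLike.mem_coe, LinearMap.mem_ker, map_sub]
    show c (((1 : Λ) ⊗ₜ[k] MulOpposite.op a) • m) v - c m (a • v) = 0
    rw [hbal, sub_self]
  exact ((TVrel k Λ V M).liftQ ℓ hker).toAddMonoidHom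

@[simp] lemma TV.lift_mk (c : M → V → T) (h1) (h2) (hbal) (m : M) (v : V) :
    TV.lift c h1 h2 hbal (TV.mk k Λ V m v) = c m v := rfl

lemma TV.hom_ext {F G : TV k Λ V M →+ T}
    (h : ∀ m v, F (TV.mk k Λ V m v) = G (TV.mk k Λ V m v)) : F = G := by
  ext x
  refine TV.ind (p := fun z => F z = G z) h (fun x y hx hy => ?_) x
  dsimp -failIfUnchanged only at hx hy ⊢
  rw [map_add, map_add, hx, hy]

end Lift

/-- The left `Λ`-action on `TV`. -/
noncomputable def TV.smulHom (a : Λ) : TV k Λ V M →+ TV k Λ V M :=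
  TV.lift (fun m v => TV.mk k Λ V ((a ⊗ₜ[k] (1 : Λᵐᵒᵖ)) • m) v)
    (fun m m' v => by dsimp -failIfUnchanged only; rw [smul_add, TV.mk_add_left])
    (fun m v v' => by dsimp -failIfUnchanged only; rw [TV.mk_add_right])
    (fun c m v => by
      dsimp -failIfUnchanged only
      have hcomm : (a ⊗ₜ[k] (1 : Λᵐᵒᵖ)) * ((1 : Λ) ⊗ₜ[k] MulOpposite.op c)
          = ((1 : Λ) ⊗ₜ[k] MulOpposite.op c) * (a ⊗ₜ[k] (1 : Λᵐᵒᵖ)) := by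
        rw [Algebra.TensorProduct.tmul_mul_tmul, Algebra.TensorProduct.tmul_mul_tmul]
        rw [one_mul, mul_one, one_mul, mul_one]
      rw [smul_smul, hcomm, ← smul_smul]
      exact TV.mk_rel c _ v)

lemma TV.smulHom_mk (a : Λ) (m : M) (v : V) :
    TV.smulHom a (TV.mk k Λ V m v) = TV.mk k Λ V ((a ⊗ₜ[k] (1 : Λᵐᵒᵖ)) • m) v := rfl

noncomputable instance : Module Λ (TV k Λ V M) where
  smul a x := TV.smulHom a x
  one_smul x := by
    show TV.smulHom 1 x = x
    refine TV.ind (p := fun z => TV.smulHom 1 z = z) (fun m v => ?_) (fun x y hx hy => ?_) x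
    · dsimp -failIfUnchanged only at *
      rw [TV.smulHom_mk]
      have h1 : ((1 : Λ) ⊗ₜ[k] (1 : Λᵐᵒᵖ)) = (1 : E k Λ) := rfl
      rw [h1, one_smul]
    · dsimp -failIfUnchanged only at *
      rw [map_add, hx, hy]
  mul_smul a b x := by
    show TV.smulHom (a * b) x = TV.smulHom a (TV.smulHom b x)
    refine TV.ind (p := fun z => TV.smulHom (a * b) z = TV.smulHom a (TV.smulHom b z))
      (fun m v => ?_) (fun x y hx hy => ?_) x
    · dsimp -failIfUnchanged only at *
      rw [TV.smulHom_mk, TV.smulHom_mk, TV.smulHom_mk, smul_smul]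
      congr 2
      rw [Algebra.TensorProduct.tmul_mul_tmul, mul_one]
    · dsimp -failIfUnchanged only at *
      rw [map_add, map_add, map_add, hx, hy]
  smul_zero a := (TV.smulHom (M := M) a).map_zero
  smul_add a x y := (TV.smulHom a).map_add x y
  add_smul a b x := by
    show TV.smulHom (a + b) x = TV.smulHom a x + TV.smulHom b x
    refine TV.ind (p := fun z => TV.smulHom (a + b) z = TV.smulHom a z + TV.smulHom b z)
      (fun m v => ?_) (fun x y hx hy => ?_) x
    · dsimp -failIfUnchanged only at *
      rw [TV.smulHom_mk, TV.smulHom_mk, TV.smulHom_mk, ← TV.mk_add_left]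
      congr 2
      rw [TensorProduct.add_tmul, add_smul]
    · dsimp -failIfUnchanged only at *
      rw [map_add, map_add, map_add, hx, hy]
      abel
  zero_smul x := by
    show TV.smulHom 0 x = 0
    refine TV.ind (p := fun z => TV.smulHom 0 z = 0) (fun m v => ?_) (fun x y hx hy => ?_) x
    · dsimp -failIfUnchanged only at *
      rw [TV.smulHom_mk]
      have h1 : ((0 : Λ) ⊗ₜ[k] (1 : Λᵐᵒᵖ)) = (0 : E k Λ) := TensorProduct.zero_tmul _ _
      rw [h1]; exact (congrArg (fun m' => TV.mk k Λ V m' v) (zero_smul (E k Λ) m)).trans (TV.mk_zero_left v)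
    · dsimp -failIfUnchanged only at *
      rw [map_add, hx, hy, add_zero]

lemma TV.smul_mk (a : Λ) (m : M) (v : V) :
    a • TV.mk k Λ V m v = TV.mk k Λ V ((a ⊗ₜ[k] (1 : Λᵐᵒᵖ)) • m) v := rfl

lemma TV.smul_def (a : Λ) (x : TV k Λ V M) : a • x = TV.smulHom a x := rfl

lemma TV.smul_add' (a : Λ) (x y : TV k Λ V M) : a • (x + y) = a • x + a • y :=
  smul_add a x y

section Map
variable {M' : Type u} [AddCommGroup M'] [Module (E k Λ) M']

/-- Functoriality for right-`Λ`-equivariant additive maps. -/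
noncomputable def TV.map (h : M →+ M')
    (hr : ∀ (a : Λ) (m : M),
      h (((1 : Λ) ⊗ₜ[k] MulOpposite.op a) • m) = ((1 : Λ) ⊗ₜ[k] MulOpposite.op a) • h m) :
    TV k Λ V M →+ TV k Λ V M' :=
  TV.lift (fun m v => TV.mk k Λ V (h m) v)
    (fun m m' v => by dsimp -failIfUnchanged only; rw [map_add, TV.mk_add_left])
    (fun m v v' => by dsimp -failIfUnchanged only; rw [TV.mk_add_right])
    (fun a m v => by dsimp -failIfUnchanged only; rw [hr, TV.mk_rel])

@[simp] lemma TV.map_mk (h : M →+ M') (hr) (m : M) (v : V) :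
    TV.map h hr (TV.mk k Λ V m v) = TV.mk k Λ V (h m) v := rfl

/-- Functoriality for `E`-linear maps: yields `Λ`-linear maps. -/
noncomputable def TV.mapL (f : M →ₗ[E k Λ] M') : TV k Λ V M →ₗ[Λ] TV k Λ V M' where
  toFun := TV.map (k := k) (V := V) f.toAddMonoidHom (fun a m => f.map_smul _ m)
  map_add' x y := map_add _ x y
  map_smul' a x := by
    dsimp -failIfUnchanged only
    rw [RingHom.id_apply, TV.smul_def, TV.smul_def]
    refine TV.ind (p := fun z =>
        TV.map (k := k) (V := V) f.toAddMonoidHom (fun a m => f.map_smul _ m) (TV.smulHom a z)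
          = TV.smulHom a
            (TV.map (k := k) (V := V) f.toAddMonoidHom (fun a m => f.map_smul _ m) z))
      (fun m v => ?_) (fun x y hx hy => ?_) x
    · dsimp -failIfUnchanged only at *
      show TV.mk k Λ V (f ((a ⊗ₜ[k] (1 : Λᵐᵒᵖ)) • m)) v = TV.mk k Λ V ((a ⊗ₜ[k] (1 : Λᵐᵒᵖ)) • f m) v
      exact congrArg (fun m' => TV.mk k Λ V m' v) (f.map_smul _ m)
    · dsimp -failIfUnchanged only at *
      rw [map_add, map_add, map_add, map_add, hx, hy]

@[simp] lemma TV.mapL_mk (f : M →ₗ[E k Λ] M') (m : M) (v : V) :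
    TV.mapL f (TV.mk k Λ V m v) = TV.mk k Λ V (f m) v := rfl

/-- `E`-linear equivalences induce `Λ`-linear equivalences on `TV`. -/
noncomputable def TV.congr (f : M ≃ₗ[E k Λ] M') : TV k Λ V M ≃ₗ[Λ] TV k Λ V M' := by
  refine LinearEquiv.ofLinear (TV.mapL f.toLinearMap) (TV.mapL f.symm.toLinearMap) ?_ ?_
  · apply LinearMap.ext
    intro x
    simp only [LinearMap.comp_apply, LinearMap.id_apply]
    refine TV.ind
      (p := fun z => TV.mapL (V := V) f.toLinearMap (TV.mapL f.symm.toLinearMap z) = z)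
      (fun m v => ?_) (fun x y hx hy => ?_) x
    · dsimp -failIfUnchanged only at *
      rw [TV.mapL_mk, TV.mapL_mk]
      simp
    · dsimp -failIfUnchanged only at *
      rw [map_add, map_add, hx, hy]
  · apply LinearMap.ext
    intro x
    simp only [LinearMap.comp_apply, LinearMap.id_apply]
    refine TV.ind
      (p := fun z => TV.mapL (V := V) f.symm.toLinearMap (TV.mapL f.toLinearMap z) = z)
      (fun m v => ?_) (fun x y hx hy => ?_) x
    · dsimp -failIfUnchanged only at *
      rw [TV.mapL_mk, TV.mapL_mk]
      simp
    · dsimp -failIfUnchanged only at *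
      rw [map_add, map_add, hx, hy]

end Map

section BaseIso
variable {L : Type u} [AddCommGroup L] [Module (E k Λ) L]

/-- `L ⊗_Λ V ≅ V` when `L` is the bimodule `Λ`. -/
noncomputable def TVLequiv (e : L ≃+ Λ)
    (heL : ∀ (a : Λ) (x : L), e ((a ⊗ₜ[k] (1 : Λᵐᵒᵖ)) • x) = a * e x)
    (heR : ∀ (a : Λ) (x : L), e (((1 : Λ) ⊗ₜ[k] MulOpposite.op a) • x) = e x * a) :
    TV k Λ V L ≃ₗ[Λ] V := by
  let f : TV k Λ V L →+ V :=
    TV.lift (fun l v => e l • v)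
      (fun l l' v => by dsimp -failIfUnchanged only; rw [map_add, add_smul])
      (fun l v v' => by dsimp -failIfUnchanged only; rw [smul_add])
      (fun a l v => by dsimp -failIfUnchanged only; rw [heR, mul_smul])
  have hf : ∀ l v, f (TV.mk k Λ V l v) = e l • v := fun l v => rfl
  let g : V →+ TV k Λ V L :=
    AddMonoidHom.mk' (fun v => TV.mk k Λ V (e.symm 1) v) (fun v v' => TV.mk_add_right _ _ _)
  have hgf : ∀ z, g (f z) = z := by
    refine TV.ind (p := fun z => g (f z) = z) (fun l v => ?_) (fun x y hx hy => ?_)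
    · show TV.mk k Λ V (e.symm 1) (e l • v) = TV.mk k Λ V l v
      rw [← TV.mk_rel]
      congr 1
      apply e.injective
      rw [heR, e.apply_symm_apply, one_mul]
    · dsimp -failIfUnchanged only at *
      rw [map_add, map_add, hx, hy]
  have hfg : ∀ v, f (g v) = v := by
    intro v
    show e (e.symm 1) • v = v
    rw [e.apply_symm_apply, one_smul]
  have hsmul : ∀ (a : Λ) z, f (a • z) = a • f z := by
    intro a
    refine TV.ind (p := fun z => f (a • z) = a • f z) (fun l v => ?_) (fun x y hx hy => ?_)
    · dsimp -failIfUnchanged only at *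
      rw [TV.smul_mk, hf, hf, heL, mul_smul]
    · dsimp -failIfUnchanged only at *
      rw [TV.smul_add', map_add, hx, hy, map_add, smul_add]
  exact
    { toFun := f
      invFun := g
      left_inv := hgf
      right_inv := hfg
      map_add' := f.map_add
      map_smul' := hsmul }

end BaseIso

section EFree
variable [FiniteDimensional k Λ] [Module.Finite Λ V]

set_option linter.unusedSectionVars false in
lemma smulE_tmul (w : E k Λ) (z : E k Λ) : w • z = w * z := rfl

set_option maxHeartbeats 2000000 in
/-- `Λᵉ ⊗_Λ V` is a f.g. free left `Λ`-module. -/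
lemma TV.E_iso : ∃ d : ℕ, Nonempty (TV k Λ V (E k Λ) ≃ₗ[Λ] (Fin d → Λ)) := by
  classical
  letI instkV : Module k V := Module.compHom V (algebraMap k Λ)
  have kV_smul : ∀ (c : k) (v : V), (c • v : V) = (algebraMap k Λ c) • v := fun _ _ => rfl
  haveI : IsScalarTower k Λ V := ⟨fun c a v => by
    show (c • a) • v = (algebraMap k Λ c) • (a • v)
    rw [Algebra.smul_def, mul_smul]⟩
  haveI : Module.Finite k V := Module.Finite.trans Λ V
  set d := Module.finrank k V with hd
  let bV : Module.Basis (Fin d) k V := Module.finBasis k V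
  let Gv : V → (E k Λ →ₗ[k] (Fin d → Λ)) := fun v =>
    TensorProduct.lift (LinearMap.mk₂ k (fun (x : Λ) (y : Λᵐᵒᵖ) =>
        fun t => (bV.repr (y.unop • v)) t • x)
      (by intro x x' y; funext t; dsimp -failIfUnchanged only; rw [smul_add]; rfl)
      (by intro c x y; funext t; dsimp -failIfUnchanged only
          show (bV.repr (y.unop • v)) t • (c • x) = c • ((bV.repr (y.unop • v)) t • x)
          rw [smul_comm])
      (by intro x y y'; funext t; dsimp -failIfUnchanged only
          show (bV.repr ((y + y').unop • v)) t • x = _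
          rw [MulOpposite.unop_add, add_smul, map_add, Finsupp.add_apply, add_smul]; rfl)
      (by intro c x y; funext t; dsimp -failIfUnchanged only
          have h : ((c • y).unop) • v = c • (y.unop • v) := by
            rw [MulOpposite.unop_smul, kV_smul c (y.unop • v), Algebra.smul_def, mul_smul]
          show (bV.repr ((c • y).unop • v)) t • x = c • ((bV.repr (y.unop • v)) t • x)
          rw [h, map_smul, Finsupp.smul_apply, smul_assoc]))
  have hG : ∀ (v : V) (x : Λ) (y : Λᵐᵒᵖ),
      Gv v (x ⊗ₜ[k] y) = fun t => (bV.repr (y.unop • v)) t • x := fun _ _ _ => rfl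
  have hc2 : ∀ (z : E k Λ) (v v' : V), Gv (v + v') z = Gv v z + Gv v' z := by
    intro z v v'
    induction z using TensorProduct.induction_on with
    | zero => rw [map_zero, map_zero, map_zero, add_zero]
    | tmul x y =>
      rw [hG, hG, hG]
      funext t
      show (bV.repr (y.unop • (v + v'))) t • x = _
      rw [smul_add, map_add, Finsupp.add_apply, add_smul]
      rfl
    | add z1 z2 h1 h2 => rw [map_add, map_add, map_add, h1, h2]; abel
  have hbal : ∀ (a : Λ) (z : E k Λ) (v : V),
      Gv v ((((1 : Λ) ⊗ₜ[k] MulOpposite.op a)) • z) = Gv (a • v) z := by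
    intro a z v
    induction z using TensorProduct.induction_on with
    | zero => rw [smul_zero, map_zero, map_zero]
    | tmul x y =>
      have h1 : (((1 : Λ) ⊗ₜ[k] MulOpposite.op a)) • (x ⊗ₜ[k] y)
          = x ⊗ₜ[k] (MulOpposite.op a * y) := by
        rw [smulE_tmul, Algebra.TensorProduct.tmul_mul_tmul, one_mul]
      rw [h1, hG, hG]
      funext t
      have h2 : (MulOpposite.op a * y).unop • v = y.unop • (a • v) := by
        rw [MulOpposite.unop_mul, MulOpposite.unop_op, mul_smul]
      rw [h2]
    | add z1 z2 h1 h2 => rw [smul_add, map_add, map_add, h1, h2]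
  let θ : TV k Λ V (E k Λ) →+ (Fin d → Λ) :=
    TV.lift (fun z v => Gv v z)
      (fun z z' v => by dsimp -failIfUnchanged only; rw [map_add])
      (fun z v v' => by dsimp -failIfUnchanged only; rw [hc2])
      (fun a z v => by dsimp -failIfUnchanged only; rw [hbal])
  have hθ : ∀ z v, θ (TV.mk k Λ V z v) = Gv v z := fun _ _ => rfl
  have hθsmul : ∀ (a : Λ) w, θ (a • w) = a • θ w := by
    intro a
    refine TV.ind (p := fun w => θ (a • w) = a • θ w) (fun z v => ?_) (fun x y hx hy => ?_)
    · dsimp -failIfUnchanged only at *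
      rw [TV.smul_mk, hθ, hθ]
      induction z using TensorProduct.induction_on with
      | zero => simp
      | tmul x y =>
        have h1 : ((a ⊗ₜ[k] (1 : Λᵐᵒᵖ))) • (x ⊗ₜ[k] y) = (a * x) ⊗ₜ[k] y := by
          rw [smulE_tmul, Algebra.TensorProduct.tmul_mul_tmul, one_mul]
        rw [h1, hG, hG]
        funext t
        show (bV.repr (y.unop • v)) t • (a * x) = a • ((bV.repr (y.unop • v)) t • x)
        rw [smul_eq_mul, mul_smul_comm]
      | add z1 z2 h1 h2 => rw [smul_add, map_add, map_add, h1, h2, smul_add]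
    · dsimp -failIfUnchanged only at *
      rw [TV.smul_add', map_add, hx, hy, map_add, smul_add]
  let ψfun : (Fin d → Λ) → TV k Λ V (E k Λ) := fun g =>
    ∑ t, TV.mk k Λ V (g t ⊗ₜ[k] (1 : Λᵐᵒᵖ)) (bV t)
  have hψadd : ∀ g g', ψfun (g + g') = ψfun g + ψfun g' := by
    intro g g'
    rw [show ψfun (g + g') = ∑ t, (TV.mk k Λ V (g t ⊗ₜ[k] (1 : Λᵐᵒᵖ)) (bV t)
        + TV.mk k Λ V (g' t ⊗ₜ[k] (1 : Λᵐᵒᵖ)) (bV t)) from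
      Finset.sum_congr rfl fun t _ => by
        show TV.mk k Λ V ((g t + g' t) ⊗ₜ[k] (1 : Λᵐᵒᵖ)) (bV t) = _
        rw [TensorProduct.add_tmul, TV.mk_add_left]]
    exact Finset.sum_add_distrib
  have hψsmul : ∀ (a : Λ) g, ψfun (a • g) = a • ψfun g := by
    intro a g
    rw [show ψfun (a • g) = ∑ t, a • TV.mk k Λ V (g t ⊗ₜ[k] (1 : Λᵐᵒᵖ)) (bV t) from
      Finset.sum_congr rfl fun t _ => by
        show TV.mk k Λ V ((a • g) t ⊗ₜ[k] (1 : Λᵐᵒᵖ)) (bV t) = _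
        rw [TV.smul_mk]
        congr 1
        rw [smulE_tmul, Algebra.TensorProduct.tmul_mul_tmul, mul_one, Pi.smul_apply,
          smul_eq_mul]]
    rw [Finset.smul_sum]
  have hθψ : ∀ g, θ (ψfun g) = g := by
    intro g
    rw [show θ (ψfun g) = ∑ t, θ (TV.mk k Λ V (g t ⊗ₜ[k] (1 : Λᵐᵒᵖ)) (bV t)) from
      map_sum θ _ _]
    funext t'
    rw [Finset.sum_apply]
    have : ∀ t, θ (TV.mk k Λ V (g t ⊗ₜ[k] (1 : Λᵐᵒᵖ)) (bV t)) t'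
        = if t = t' then g t else 0 := by
      intro t
      rw [hθ, hG]
      show (bV.repr ((1 : Λᵐᵒᵖ).unop • bV t)) t' • g t = _
      rw [MulOpposite.unop_one, one_smul, Module.Basis.repr_self, Finsupp.single_apply]
      by_cases h : t = t' <;> simp [h]
    rw [Finset.sum_congr rfl fun t _ => this t, Finset.sum_ite_eq' Finset.univ t' g]
    simp
  have hψθ : ∀ w, ψfun (θ w) = w := by
    refine TV.ind (p := fun w => ψfun (θ w) = w) (fun z v => ?_) (fun x y hx hy => ?_)
    · dsimp -failIfUnchanged only at *
      rw [hθ]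
      induction z using TensorProduct.induction_on with
      | zero =>
        rw [map_zero]
        have hz : ∀ t : Fin d, TV.mk k Λ V (((0 : Fin d → Λ) t) ⊗ₜ[k] (1 : Λᵐᵒᵖ)) (bV t)
            = 0 := by
          intro t
          show TV.mk k Λ V ((0 : Λ) ⊗ₜ[k] (1 : Λᵐᵒᵖ)) (bV t) = 0
          rw [TensorProduct.zero_tmul, TV.mk_zero_left]
        have : ψfun 0 = 0 := by
          show (∑ t, TV.mk k Λ V (((0 : Fin d → Λ) t) ⊗ₜ[k] (1 : Λᵐᵒᵖ)) (bV t)) = 0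
          rw [Finset.sum_congr rfl fun t _ => hz t, Finset.sum_const_zero]
        rw [this, TV.mk_zero_left]
      | tmul x y =>
        rw [hG]
        show ∑ t, TV.mk k Λ V (((bV.repr (y.unop • v)) t • x) ⊗ₜ[k] (1 : Λᵐᵒᵖ)) (bV t)
            = TV.mk k Λ V (x ⊗ₜ[k] y) v
        have step : ∀ t, TV.mk k Λ V (((bV.repr (y.unop • v)) t • x) ⊗ₜ[k] (1 : Λᵐᵒᵖ)) (bV t)
            = TV.mk k Λ V (x ⊗ₜ[k] (1 : Λᵐᵒᵖ)) (((bV.repr (y.unop • v)) t) • bV t) := by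
          intro t
          set r := (bV.repr (y.unop • v)) t with hr
          have e1 : (r • x) ⊗ₜ[k] (1 : Λᵐᵒᵖ)
              = (((1 : Λ) ⊗ₜ[k] MulOpposite.op (algebraMap k Λ r))) • (x ⊗ₜ[k] (1 : Λᵐᵒᵖ)) := by
            rw [smulE_tmul, Algebra.TensorProduct.tmul_mul_tmul, one_mul, mul_one]
            rw [TensorProduct.smul_tmul]
            congr 1
            rw [← MulOpposite.op_one, ← MulOpposite.op_smul, Algebra.algebraMap_eq_smul_one]
          rw [e1, TV.mk_rel, kV_smul]
        rw [Finset.sum_congr rfl fun t _ => step t]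
        let mkR : V →+ TV k Λ V (E k Λ) :=
          AddMonoidHom.mk' (fun u => TV.mk k Λ V (x ⊗ₜ[k] (1 : Λᵐᵒᵖ)) u)
            (fun u u' => TV.mk_add_right _ _ _)
        rw [show (∑ t, TV.mk k Λ V (x ⊗ₜ[k] (1 : Λᵐᵒᵖ)) (((bV.repr (y.unop • v)) t) • bV t))
            = mkR (∑ t, ((bV.repr (y.unop • v)) t) • bV t) from (map_sum mkR _ _).symm]
        rw [Module.Basis.sum_repr]
        show TV.mk k Λ V (x ⊗ₜ[k] (1 : Λᵐᵒᵖ)) (y.unop • v) = _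
        rw [← TV.mk_rel]
        congr 1
        rw [smulE_tmul, Algebra.TensorProduct.tmul_mul_tmul, one_mul, mul_one,
          MulOpposite.op_unop]
      | add z1 z2 h1 h2 =>
        rw [map_add, hψadd, h1, h2, ← TV.mk_add_left]
    · dsimp -failIfUnchanged only at *
      rw [map_add, hψadd, hx, hy]
  exact ⟨d, ⟨{ toFun := θ
               map_add' := θ.map_add
               map_smul' := hθsmul
               invFun := ψfun
               left_inv := hψθ
               right_inv := hθψ }⟩⟩

set_option maxHeartbeats 1000000 in
/-- `TV` of a finite free `Λᵉ`-module is the product of copies of `TV Λᵉ`. -/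
noncomputable def TVpi (m : ℕ) :
    TV k Λ V (Fin m → E k Λ) ≃ₗ[Λ] (Fin m → TV k Λ V (E k Λ)) := by
  classical
  let Φ : TV k Λ V (Fin m → E k Λ) →ₗ[Λ] (Fin m → TV k Λ V (E k Λ)) :=
    LinearMap.pi (fun j => TV.mapL (LinearMap.proj j))
  let Ψ : (Fin m → TV k Λ V (E k Λ)) →ₗ[Λ] TV k Λ V (Fin m → E k Λ) :=
    ∑ j, (TV.mapL (LinearMap.single (E k Λ) (fun _ => E k Λ) j)) ∘ₗ (LinearMap.proj j)
  have hΨ : ∀ g, Ψ g = ∑ j, TV.mapL (LinearMap.single (E k Λ) (fun _ => E k Λ) j) (g j) := by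
    intro g
    rw [LinearMap.sum_apply]
    rfl
  have hcomp : ∀ (j j' : Fin m) (w : TV k Λ V (E k Λ)),
      TV.mapL (V := V) (LinearMap.proj j')
        (TV.mapL (LinearMap.single (E k Λ) (fun _ => E k Λ) j) w)
      = if j = j' then w else 0 := by
    intro j j' w
    by_cases h : j = j'
    · subst h
      simp only [if_pos rfl]
      refine TV.ind (p := fun w => TV.mapL (V := V) (LinearMap.proj j)
        (TV.mapL (LinearMap.single (E k Λ) (fun _ => E k Λ) j) w) = w)
        (fun z v => ?_) (fun x y hx hy => ?_) w
      · dsimp -failIfUnchanged only at *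
        rw [TV.mapL_mk, TV.mapL_mk]
        simp only [LinearMap.proj_apply, LinearMap.single_apply, Pi.single_eq_same]
      · dsimp -failIfUnchanged only at *
        rw [map_add, map_add, hx, hy]
    · simp only [if_neg h]
      refine TV.ind (p := fun w => TV.mapL (V := V) (LinearMap.proj j')
        (TV.mapL (LinearMap.single (E k Λ) (fun _ => E k Λ) j) w) = 0)
        (fun z v => ?_) (fun x y hx hy => ?_) w
      · dsimp -failIfUnchanged only at *
        rw [TV.mapL_mk, TV.mapL_mk]
        simp only [LinearMap.proj_apply, LinearMap.single_apply,
          Pi.single_eq_of_ne (Ne.symm h)]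
        exact TV.mk_zero_left _
      · dsimp -failIfUnchanged only at *
        simp only [map_add, hx, hy, add_zero]
  refine LinearEquiv.ofLinear Φ Ψ ?_ ?_
  · apply LinearMap.ext
    intro g
    rw [LinearMap.comp_apply, LinearMap.id_apply]
    funext j'
    show TV.mapL (V := V) (LinearMap.proj j') (Ψ g) = g j'
    rw [hΨ, map_sum]
    rw [Finset.sum_congr rfl fun j _ => hcomp j j' (g j)]
    rw [Finset.sum_ite_eq' Finset.univ j' g]
    simp
  · apply LinearMap.ext
    intro w
    rw [LinearMap.comp_apply, LinearMap.id_apply]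
    refine TV.ind (p := fun w => Ψ (Φ w) = w) (fun z v => ?_) (fun x y hx hy => ?_) w
    · dsimp -failIfUnchanged only
      have hΦ : Φ (TV.mk k Λ V z v) = fun j => TV.mk k Λ V (z j) v := rfl
      rw [hΦ, hΨ]
      have : ∀ j, TV.mapL (V := V) (LinearMap.single (E k Λ) (fun _ => E k Λ) j)
          (TV.mk k Λ V (z j) v) = TV.mk k Λ V (Pi.single j (z j)) v := fun j => by
        rw [TV.mapL_mk, LinearMap.single_apply]
      rw [Finset.sum_congr rfl fun j _ => this j]
      let mkL : (Fin m → E k Λ) →+ TV k Λ V (Fin m → E k Λ) :=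
        AddMonoidHom.mk' (fun u => TV.mk k Λ V u v) (fun u u' => TV.mk_add_left _ _ _)
      rw [show (∑ j, TV.mk k Λ V (Pi.single j (z j)) v) = mkL (∑ j, Pi.single j (z j)) from
        (map_sum mkL _ _).symm]
      rw [Finset.univ_sum_single]
      rfl
    · dsimp -failIfUnchanged only at *
      rw [Φ.map_add, Ψ.map_add, hx, hy]

/-- `TV` of a f.g. projective `Λᵉ`-module is f.g. projective over `Λ`. -/
lemma TV.fgproj (P : Type u) [AddCommGroup P] [Module (E k Λ) P]
    [Module.Finite (E k Λ) P] [Module.Projective (E k Λ) P] :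
    Module.Finite Λ (TV k Λ V P) ∧ Module.Projective Λ (TV k Λ V P) := by
  obtain ⟨m, π, hπ⟩ := Module.Finite.exists_fin' (E k Λ) P
  obtain ⟨σ, hσ⟩ := Module.projective_lifting_property π LinearMap.id hπ
  have hσ' : ∀ x, π (σ x) = x := by
    intro x
    have := congrArg (fun φ => φ x) hσ
    simpa using this
  have hsec : ∀ z : TV k Λ V P, TV.mapL π (TV.mapL σ z) = z := by
    refine TV.ind (p := fun z => TV.mapL (V := V) π (TV.mapL σ z) = z)
      (fun x v => ?_) (fun x y hx hy => ?_)
    · dsimp -failIfUnchanged only at *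
      rw [TV.mapL_mk, TV.mapL_mk, hσ']
    · dsimp -failIfUnchanged only at *
      rw [map_add, map_add, hx, hy]
  obtain ⟨d, ⟨εE⟩⟩ := TV.E_iso (k := k) (Λ := Λ) (V := V)
  let ε : TV k Λ V (Fin m → E k Λ) ≃ₗ[Λ] (Fin m → Fin d → Λ) :=
    (TVpi m).trans (LinearEquiv.piCongrRight fun _ => εE)
  haveI hpp : Module.Projective Λ (TV k Λ V (Fin m → E k Λ)) :=
    Module.Projective.of_equiv ε.symm
  haveI hpf : Module.Finite Λ (TV k Λ V (Fin m → E k Λ)) :=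
    Module.Finite.equiv ε.symm
  constructor
  · exact Module.Finite.of_surjective (TV.mapL π) (fun z => ⟨TV.mapL σ z, hsec z⟩)
  · exact Module.Projective.of_split (TV.mapL σ) (TV.mapL π) (LinearMap.ext hsec)

end EFree

end TVSec

section MainSec
variable {L : Type u} [AddCommGroup L] [Module (E k Λ) L]
variable [FiniteDimensional k Λ]

/-- Every bimodule syzygy of `Λ` is projective as a right `Λ`-module. -/
lemma rightProj (e : L ≃+ Λ)
    (heR : ∀ (a : Λ) (x : L), e (((1 : Λ) ⊗ₜ[k] MulOpposite.op a) • x) = e x * a) :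
    ∀ (n : ℕ) (M : ModuleCat.{u} (E k Λ)),
      IsNthSyzygy (E k Λ) n M (ModuleCat.of (E k Λ) L) →
      Module.Projective Λᵐᵒᵖ (Rop k Λ ↥M) := by
  have heR' : ∀ (a : Λᵐᵒᵖ) (x : Rop k Λ L), e (a • x) = e x * a.unop := by
    intro a x
    have h := heR a.unop x
    rw [MulOpposite.op_unop] at h
    exact h
  intro n
  induction n with
  | zero =>
    intro M hM
    have hM' : Nonempty (↥M ≃ₗ[E k Λ] ↥(ModuleCat.of (E k Λ) L)) := hM
    obtain ⟨eM⟩ := hM'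
    have e1 : Rop k Λ ↥M ≃ₗ[Λᵐᵒᵖ] Rop k Λ L := Rop.congr (k := k) eM
    have e2 : Rop k Λ L ≃ₗ[Λᵐᵒᵖ] Λᵐᵒᵖ :=
      { toFun := fun x => MulOpposite.op (e x)
        invFun := fun y => (e.symm y.unop : Rop k Λ L)
        left_inv := fun x => e.symm_apply_apply x
        right_inv := fun y => by simp
        map_add' := fun x x' => by dsimp -failIfUnchanged only; exact (congrArg MulOpposite.op (e.map_add x x')).trans (MulOpposite.op_add _ _)
        map_smul' := fun a x => by
          dsimp -failIfUnchanged only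
          rw [heR' a x, MulOpposite.op_mul, MulOpposite.op_unop]
          rfl }
    exact Module.Projective.of_equiv (e1.trans e2).symm
  | succ n ih =>
    intro M hM
    have hM' : ∃ K : ModuleCat.{u} (E k Λ),
        IsNthSyzygy (E k Λ) n K (ModuleCat.of (E k Λ) L) ∧
        IsFirstSyzygy (E k Λ) M K := hM
    obtain ⟨K, hK, P, f, hPfin, hcov, ⟨eM⟩⟩ := hM'
    haveI hPproj : Module.Projective (E k Λ) ↥P := hcov.projective
    haveI := hPfin
    haveI hKrop : Module.Projective Λᵐᵒᵖ (Rop k Λ ↥K) := ih K hK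
    obtain ⟨s2, hs2⟩ := Module.projective_lifting_property
      (Rop.mapL (k := k) f) LinearMap.id (fun y => hcov.surjective y)
    have hs2' : ∀ x : Rop k Λ ↥K, Rop.mapL (k := k) f (s2 x) = x := by
      intro x
      have := congrArg (fun φ => φ x) hs2
      simpa using this
    let δ : Rop k Λ ↥P →ₗ[Λᵐᵒᵖ] Rop k Λ ↥P :=
      LinearMap.id - s2 ∘ₗ Rop.mapL (k := k) f
    have hδ : ∀ m : Rop k Λ ↥P, δ m = m - s2 (Rop.mapL (k := k) f m) := fun m => rfl
    have hδker : ∀ m : Rop k Λ ↥P, Rop.mapL (k := k) f (δ m) = 0 := by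
      intro m
      rw [hδ, map_sub, hs2', sub_self]
    let ρ : Rop k Λ ↥P →ₗ[Λᵐᵒᵖ] Rop k Λ ↥(LinearMap.ker f) :=
      { toFun := fun m => (⟨δ m, hδker m⟩ : ↥(LinearMap.ker f))
        map_add' := fun m m' => Subtype.ext (δ.map_add m m')
        map_smul' := fun a m => Subtype.ext (δ.map_smul a m) }
    have hρ : Module.Projective Λᵐᵒᵖ (Rop k Λ ↥(LinearMap.ker f)) := by
      haveI hamb : Module.Projective Λᵐᵒᵖ (Rop k Λ ↥P) :=
        ropProjective_of_fgproj (k := k) (Λ := Λ) ↥P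
      refine Module.Projective.of_split (Rop.mapL (k := k) (LinearMap.ker f).subtype) ρ ?_
      refine LinearMap.ext fun x => Subtype.ext ?_
      show δ ((LinearMap.ker f).subtype x) = (LinearMap.ker f).subtype x
      refine (hδ _).trans ?_
      have hx : Rop.mapL (k := k) f ((LinearMap.ker f).subtype x) = 0 := x.2
      rw [hx, map_zero]; exact sub_zero _
    exact Module.Projective.of_equiv (Rop.congr (k := k) eM).symm
section Induction
variable (V : Type u) [AddCommGroup V] [Module Λ V] [Module.Finite Λ V]

set_option maxHeartbeats 1000000 in
lemma mainInduction (e : L ≃+ Λ)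
    (heL : ∀ (a : Λ) (x : L), e ((a ⊗ₜ[k] (1 : Λᵐᵒᵖ)) • x) = a * e x)
    (heR : ∀ (a : Λ) (x : L), e (((1 : Λ) ⊗ₜ[k] MulOpposite.op a) • x) = e x * a) :
    ∀ (n : ℕ) (M : ModuleCat.{u} (E k Λ)) (SW : ModuleCat.{u} Λ),
      IsNthSyzygy (E k Λ) n M (ModuleCat.of (E k Λ) L) →
      IsNthSyzygy Λ n SW (ModuleCat.of Λ V) →
      ∃ T' : ModuleCat.{u} Λ, Module.Projective Λ T' ∧ Module.Finite Λ T' ∧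
        Nonempty (TV k Λ V ↥M ≃ₗ[Λ] (↥SW × ↥T')) := by
  intro n
  induction n with
  | zero =>
    intro M SW hM hSW
    have hM' : Nonempty (↥M ≃ₗ[E k Λ] ↥(ModuleCat.of (E k Λ) L)) := hM
    have hSW' : Nonempty (↥SW ≃ₗ[Λ] ↥(ModuleCat.of Λ V)) := hSW
    obtain ⟨eM⟩ := hM'
    obtain ⟨eS⟩ := hSW'
    have E1 : TV k Λ V ↥M ≃ₗ[Λ] TV k Λ V L := TV.congr eM
    have E2 : TV k Λ V L ≃ₗ[Λ] V := TVLequiv (k := k) e heL heR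
    have E3 : V ≃ₗ[Λ] ↥SW := eS.symm
    have E4 : ↥SW ≃ₗ[Λ] (↥SW × (Fin 0 → Λ)) :=
      { toFun := fun s => (s, 0)
        invFun := Prod.fst
        left_inv := fun s => rfl
        right_inv := fun p => Prod.ext rfl (Subsingleton.elim _ _)
        map_add' := fun s s' => Prod.ext rfl (by simp)
        map_smul' := fun a s => Prod.ext rfl (by simp) }
    exact ⟨ModuleCat.of Λ (Fin 0 → Λ), inferInstance, inferInstance,
      ⟨((E1.trans E2).trans E3).trans E4⟩⟩
  | succ n ih =>
    intro M SW hM hSW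
    have hM' : ∃ K : ModuleCat.{u} (E k Λ),
        IsNthSyzygy (E k Λ) n K (ModuleCat.of (E k Λ) L) ∧
        IsFirstSyzygy (E k Λ) M K := hM
    have hSW' : ∃ KS : ModuleCat.{u} Λ,
        IsNthSyzygy Λ n KS (ModuleCat.of Λ V) ∧ IsFirstSyzygy Λ SW KS := hSW
    obtain ⟨K, hK, P, f, hPfin, hcovP, ⟨eM⟩⟩ := hM'
    obtain ⟨KS, hKS, R, g, hRfin, hcovR, ⟨eS⟩⟩ := hSW'
    obtain ⟨T, hTproj, hTfin, ⟨e1⟩⟩ := ih K KS hK hKS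
    haveI := hcovP.projective
    haveI := hPfin
    haveI hKrop : Module.Projective Λᵐᵒᵖ (Rop k Λ ↥K) :=
      rightProj (k := k) (Λ := Λ) e heR n K hK
    -- right-`Λ`-linear splitting of `f`
    obtain ⟨s2, hs2⟩ := Module.projective_lifting_property
      (Rop.mapL (k := k) f) LinearMap.id (fun y => hcovP.surjective y)
    have hs2' : ∀ x : Rop k Λ ↥K, Rop.mapL (k := k) f (s2 x) = x := by
      intro x
      have := congrArg (fun φ => φ x) hs2
      simpa using this
    let sP : ↥K → ↥P := fun x => (s2 x : ↥P)
    have hsP : ∀ x : ↥K, f (sP x) = x := fun x => hs2' x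
    have hsPadd : ∀ x y : ↥K, sP (x + y) = sP x + sP y := fun x y => s2.map_add x y
    have hsP0 : sP 0 = 0 := s2.map_zero
    have hsPsmul : ∀ (a : Λ) (m : ↥K),
        sP (((1 : Λ) ⊗ₜ[k] MulOpposite.op a) • m)
          = ((1 : Λ) ⊗ₜ[k] MulOpposite.op a) • sP m :=
      fun a m => s2.map_smul (MulOpposite.op a) m
    -- the tensored maps
    let ι : TV k Λ V ↥(LinearMap.ker f) →ₗ[Λ] TV k Λ V ↥P :=
      TV.mapL (LinearMap.ker f).subtype
    let fb : TV k Λ V ↥P →ₗ[Λ] TV k Λ V ↥K := TV.mapL f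
    let sb : TV k Λ V ↥K →+ TV k Λ V ↥P :=
      TV.map (AddMonoidHom.mk' sP hsPadd) hsPsmul
    have hδker : ∀ m : ↥P, f (m - sP (f m)) = 0 := by
      intro m
      rw [map_sub, hsP, sub_self]
    let r2 : ↥P →+ ↥(LinearMap.ker f) :=
      AddMonoidHom.mk' (fun m => (⟨m - sP (f m), hδker m⟩ : ↥(LinearMap.ker f)))
        (fun m m' => Subtype.ext (by
          show (m + m') - sP (f (m + m')) = (m - sP (f m)) + (m' - sP (f m'))
          rw [map_add, hsPadd]
          abel))
    have hr2e : ∀ (a : Λ) (m : ↥P),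
        r2 (((1 : Λ) ⊗ₜ[k] MulOpposite.op a) • m)
          = ((1 : Λ) ⊗ₜ[k] MulOpposite.op a) • r2 m := by
      intro a m
      apply Subtype.ext
      show (((1 : Λ) ⊗ₜ[k] MulOpposite.op a) • m) - sP (f (((1 : Λ) ⊗ₜ[k] MulOpposite.op a) • m))
          = ((1 : Λ) ⊗ₜ[k] MulOpposite.op a) • (m - sP (f m))
      rw [f.map_smul, hsPsmul, smul_sub]
    let rb : TV k Λ V ↥P →+ TV k Λ V ↥(LinearMap.ker f) := TV.map r2 hr2e
    -- structural identities
    have hfb_sb : ∀ w, fb (sb w) = w := by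
      refine TV.ind (p := fun w => fb (sb w) = w) (fun m v => ?_) (fun x y hx hy => ?_)
      · show TV.mk k Λ V (f (sP m)) v = TV.mk k Λ V m v
        rw [hsP m]
      · dsimp -failIfUnchanged only at *
        rw [map_add, map_add, hx, hy]
    have hsplit : ∀ z, ι (rb z) + sb (fb z) = z := by
      refine TV.ind (p := fun z => ι (rb z) + sb (fb z) = z) (fun m v => ?_) (fun x y hx hy => ?_)
      · show TV.mk k Λ V ((m - sP (f m) : ↥P)) v + TV.mk k Λ V (sP (f m)) v = TV.mk k Λ V m v
        rw [← TV.mk_add_left, sub_add_cancel]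
      · dsimp -failIfUnchanged only at *
        rw [map_add, map_add, map_add, map_add]
        calc ι (rb x) + ι (rb y) + (sb (fb x) + sb (fb y))
            = (ι (rb x) + sb (fb x)) + (ι (rb y) + sb (fb y)) := by abel
          _ = x + y := by rw [hx, hy]
    have hretr : ∀ y, rb (ι y) = y := by
      refine TV.ind (p := fun y => rb (ι y) = y) (fun x v => ?_) (fun x y hx hy => ?_)
      · show TV.mk k Λ V (r2 ((LinearMap.ker f).subtype x)) v = TV.mk k Λ V x v
        congr 1
        apply Subtype.ext
        show ((x : ↥P)) - sP (f (x : ↥P)) = (x : ↥P)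
        have hx : f (x : ↥P) = 0 := x.2
        rw [hx, hsP0, sub_zero]
      · dsimp -failIfUnchanged only at *
        rw [map_add, map_add, hx, hy]
    have hinj : Function.Injective ι := by
      intro y y' h
      rw [← hretr y, ← hretr y', h]
    have hkerfb : LinearMap.ker fb = LinearMap.range ι := by
      apply le_antisymm
      · intro z hz
        rw [LinearMap.mem_ker] at hz
        have := hsplit z
        rw [hz, map_zero, add_zero] at this
        exact ⟨rb z, this⟩
      · rintro z ⟨y, rfl⟩
        rw [LinearMap.mem_ker]
        refine TV.ind (p := fun y => fb (ι y) = 0) (fun x v => ?_) (fun x y hx hy => ?_) y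
        · show TV.mk k Λ V (f ((LinearMap.ker f).subtype x)) v = 0
          have hx : f (x : ↥P) = 0 := x.2
          rw [show f ((LinearMap.ker f).subtype x) = 0 from hx, TV.mk_zero_left]
        · dsimp -failIfUnchanged only at *
          rw [map_add, map_add, hx, hy, add_zero]
    -- the comparison with the projective cover of `KS × T`
    let φ : TV k Λ V ↥P →ₗ[Λ] (↥KS × ↥T) := e1.toLinearMap ∘ₗ fb
    have hφsurj : Function.Surjective φ := by
      intro c
      obtain ⟨w, hw⟩ : ∃ w, fb w = e1.symm c := ⟨sb (e1.symm c), hfb_sb _⟩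
      exact ⟨w, by show e1 (fb w) = c; rw [hw, e1.apply_symm_apply]⟩
    have hφker : LinearMap.ker φ = LinearMap.range ι := by
      rw [show LinearMap.ker φ = LinearMap.ker fb from LinearEquiv.ker_comp e1 fb, hkerfb]
    obtain ⟨hfinTV, hprojTV⟩ := TV.fgproj (k := k) (Λ := Λ) (V := V) ↥P
    haveI := hcovR.projective
    have covg' : IsProjectiveCover Λ (g.prodMap (LinearMap.id : ↥T →ₗ[Λ] ↥T)) :=
      coverProd g hcovR hTproj
    obtain ⟨T'', hT''proj, hT''fin, ⟨eq2⟩⟩ :=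
      coverCompare φ hprojTV hfinTV hφsurj _ covg'
    -- assemble the equivalence
    have A1 : TV k Λ V ↥M ≃ₗ[Λ] TV k Λ V ↥(LinearMap.ker f) := TV.congr eM
    have A2 : TV k Λ V ↥(LinearMap.ker f) ≃ₗ[Λ] ↥(LinearMap.range ι) :=
      LinearEquiv.ofInjective ι hinj
    have A3 : ↥(LinearMap.range ι) ≃ₗ[Λ] ↥(LinearMap.ker φ) :=
      LinearEquiv.ofEq _ _ hφker.symm
    have A6 : (↥(LinearMap.ker (g.prodMap (LinearMap.id : ↥T →ₗ[Λ] ↥T))) × ↥T'')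
        ≃ₗ[Λ] (↥(LinearMap.ker g) × ↥T'') := by
      exact (kerProdIdEquiv g).prodCongr (LinearEquiv.refl Λ ↥T'')
    have A7 : (↥(LinearMap.ker g) × ↥T'') ≃ₗ[Λ] (↥SW × ↥T'') := by
      exact (eS.symm).prodCongr (LinearEquiv.refl Λ ↥T'')
    refine ⟨T'', hT''proj, hT''fin, ⟨?_⟩⟩
    exact A1.trans (A2.trans (A3.trans (eq2.trans (A6.trans A7))))

end Induction
end MainSec

end Big
end BimodAux

theorem bimodule_syzygy_tensor_iso_syzygy_sum_projective
    (k : Type u) [Field k] (Λ : Type u) [Ring Λ] [Algebra k Λ] [FiniteDimensional k Λ]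
    -- L is Λ regarded as a Λ–Λ-bimodule (a module over Λᵉ = Λ ⊗_k Λᵐᵒᵖ)
    (L : Type u) [AddCommGroup L] [Module (Λ ⊗[k] Λᵐᵒᵖ) L] (e : L ≃+ Λ)
    (heL : ∀ (a : Λ) (x : L), e ((a ⊗ₜ[k] (1 : Λᵐᵒᵖ)) • x) = a * e x)
    (heR : ∀ (a : Λ) (x : L), e (((1 : Λ) ⊗ₜ[k] MulOpposite.op a) • x) = e x * a)
    (i : ℕ) (hi : 1 ≤ i)
    -- X is the i-th bimodule syzygy Ω^i_{Λᵉ}Λ, with its restricted one-sided structures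
    (X : Type u) [AddCommGroup X] [Module (Λ ⊗[k] Λᵐᵒᵖ) X] [Module Λ X] [Module Λᵐᵒᵖ X]
    (hXl : ∀ (a : Λ) (x : X), a • x = (a ⊗ₜ[k] (1 : Λᵐᵒᵖ)) • x)
    (hXr : ∀ (a : Λ) (x : X), MulOpposite.op a • x = ((1 : Λ) ⊗ₜ[k] MulOpposite.op a) • x)
    (hX : IsNthSyzygy (Λ ⊗[k] Λᵐᵒᵖ) i (ModuleCat.of (Λ ⊗[k] Λᵐᵒᵖ) X)
      (ModuleCat.of (Λ ⊗[k] Λᵐᵒᵖ) L))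
    -- V is a finitely generated left Λ-module, SV its i-th syzygy Ω^i_Λ V
    (V : Type u) [AddCommGroup V] [Module Λ V] [Module.Finite Λ V]
    (SV : Type u) [AddCommGroup SV] [Module Λ SV]
    (hSV : IsNthSyzygy Λ i (ModuleCat.of Λ SV) (ModuleCat.of Λ V))
    -- (W, b) is a realization of the tensor product Ω^i_{Λᵉ}Λ ⊗_Λ V as a left Λ-module
    (W : Type u) [AddCommGroup W] [Module Λ W] (b : X → V → W)
    (hb : IsTensor Λ X V W b)
    (hbl : ∀ (a : Λ) (x : X) (v : V), b (a • x) v = a • b x v) :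
    ∃ T' : ModuleCat.{u} Λ, Module.Projective Λ T' ∧ Module.Finite Λ T' ∧
      Nonempty (W ≃ₗ[Λ] (SV × T')) := by
  classical
  have hbal' : ∀ (a : Λ) (x : X) (v : V),
      b ((((1 : Λ) ⊗ₜ[k] MulOpposite.op a) : Λ ⊗[k] Λᵐᵒᵖ) • x) v = b x (a • v) := by
    intro a x v
    rw [← hXr]
    exact hb.balanced x a v
  let F : BimodAux.TV k Λ V X →+ W :=
    BimodAux.TV.lift (fun x v => b x v) (fun x x' v => hb.add_left x x' v)
      (fun x v v' => hb.add_right x v v') hbal'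
  have hF : ∀ x v, F (BimodAux.TV.mk k Λ V x v) = b x v := fun _ _ => rfl
  obtain ⟨G, hG, hGuniq⟩ := hb.universal (BimodAux.TV k Λ V X)
    (fun x v => BimodAux.TV.mk k Λ V x v)
    (fun x x' v => BimodAux.TV.mk_add_left x x' v)
    (fun x v v' => BimodAux.TV.mk_add_right x v v')
    (fun x a v => by rw [hXr]; exact BimodAux.TV.mk_rel a x v)
  have hGF : ∀ z, G (F z) = z := by
    have h := BimodAux.TV.hom_ext (F := G.comp F) (G := AddMonoidHom.id _) (fun m v => by
      show G (F (BimodAux.TV.mk k Λ V m v)) = BimodAux.TV.mk k Λ V m v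
      rw [hF]
      exact hG m v)
    intro z
    exact DFunLike.congr_fun h z
  have hFG : ∀ w, F (G w) = w := by
    obtain ⟨H, hH, hHuniq⟩ := hb.universal W b hb.add_left hb.add_right hb.balanced
    have h1 : F.comp G = H := hHuniq (F.comp G) (fun x v => by
      show F (G (b x v)) = b x v
      rw [hG]
      rfl)
    have h2 : AddMonoidHom.id W = H := hHuniq (AddMonoidHom.id W) (fun x v => rfl)
    intro w
    have := congrArg (fun φ => φ w) (h1.trans h2.symm)
    simpa using this
  have hFsmul : ∀ (a : Λ) z, F (a • z) = a • F z := by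
    intro a
    refine BimodAux.TV.ind (p := fun z => F (a • z) = a • F z)
      (fun x v => ?_) (fun x y hx hy => ?_)
    · dsimp -failIfUnchanged only at *
      rw [BimodAux.TV.smul_mk, hF, hF, ← hXl]
      exact hbl a x v
    · dsimp -failIfUnchanged only at *
      rw [BimodAux.TV.smul_add', map_add, hx, hy, map_add, smul_add]
  let eW : BimodAux.TV k Λ V X ≃ₗ[Λ] W :=
    { toFun := F
      invFun := G
      left_inv := hGF
      right_inv := hFG
      map_add' := F.map_add
      map_smul' := hFsmul }
  obtain ⟨T', hp, hf, ⟨eqM⟩⟩ := BimodAux.mainInduction k Λ V e heL heR i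
    (ModuleCat.of (Λ ⊗[k] Λᵐᵒᵖ) X) (ModuleCat.of Λ SV) hX hSV
  exact ⟨T', hp, hf, ⟨eW.symm.trans eqM⟩⟩
end

section
/- Let Λ be a finite dimensional k-algebra, R an Artinian commutative local k-algebra with residue field k, V a finitely generated left Λ-module with projective cover α: P(V) → V, and (M, φ) a lift of V over R. Then the induced epimorphism α_R : R ⊗_k P(V) → M (lifting α through φ) is a projective RΛ-module cover of M, and its kernel Ω_{RΛ}M is free as an R-module with k ⊗_R Ω_{RΛ}M ≅ Ω_Λ V. -/
open TensorProduct

/-- `R` is an Artinian object of the category `Ĉ` of complete local commutative Noetherian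
`k`-algebras with residue field `k`: it is an Artinian local commutative `k`-algebra whose
residue field is `k` (via the structure map). -/
def IsArtinianObjC (k R : Type u) [Field k] [CommRing R] [Algebra k R] [IsLocalRing R] : Prop :=
  IsArtinianRing R ∧ Function.Bijective (algebraMap k (IsLocalRing.ResidueField R))

/-- A lift of the `Λ`-module `V` over `R`: a finitely generated `RΛ = R ⊗_k Λ`-module `M`,
free over `R`, together with a surjective `Λ`-linear map `π : M → V` realizing an
isomorphism `k ⊗_R M ≅ V` (i.e. with kernel `𝔪_R · M`). -/
structure Lift (k Λ R V : Type u) [Field k] [Ring Λ] [Algebra k Λ]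
    [CommRing R] [Algebra k R] [IsLocalRing R]
    [AddCommGroup V] [Module Λ V] where
  M : Type u
  [addCommGroup : AddCommGroup M]
  [modRΛ : Module (R ⊗[k] Λ) M]
  [modR : Module R M]
  [modΛ : Module Λ M]
  [towerR : IsScalarTower R (R ⊗[k] Λ) M]
  compatΛ : ∀ (a : Λ) (m : M),
    a • m = (Algebra.TensorProduct.includeRight (R := k) (A := R) (B := Λ) a) • m
  finite : Module.Finite (R ⊗[k] Λ) M
  free : Module.Free R M
  π : M →ₗ[Λ] V
  surj : Function.Surjective π
  ker_eq : ∀ m : M, π m = 0 ↔ m ∈ (IsLocalRing.maximalIdeal R) • (⊤ : Submodule R M)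

attribute [instance] Lift.addCommGroup Lift.modRΛ Lift.modR Lift.modΛ Lift.towerR

/-- Nakayama's lemma for a nilpotent ideal: no finiteness needed. -/
lemma nakayama_nilpotent {R M : Type*} [CommRing R] [AddCommGroup M] [Module R M]
    {I : Ideal R} (hI : IsNilpotent I) {N : Submodule R M}
    (h : N ⊔ I • (⊤ : Submodule R M) = ⊤) : N = ⊤ := by
  obtain ⟨n, hn⟩ := hI
  have key : ∀ i : ℕ, N ⊔ I ^ (i + 1) • (⊤ : Submodule R M) = ⊤ := by
    intro i
    induction i with
    | zero => simpa using h
    | succ i ih =>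
      have h1 : I • (⊤ : Submodule R M) ≤ N ⊔ I ^ (i + 2) • ⊤ := by
        have e1 : I • (⊤ : Submodule R M) = I • N ⊔ I • (I ^ (i + 1) • ⊤) := by
          conv_lhs => rw [← ih]
          exact Submodule.smul_sup _ _ _
        rw [e1, ← Submodule.smul_assoc, smul_eq_mul, ← pow_succ']
        exact sup_le_sup Submodule.smul_le_right le_rfl
      have h2 : (⊤ : Submodule R M) ≤ N ⊔ I ^ (i + 2) • ⊤ := by
        conv_lhs => rw [← h]
        exact sup_le le_sup_left h1
      exact eq_top_iff.mpr h2
  have h2 := key n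
  rw [pow_succ, hn, zero_mul] at h2
  simpa using h2

theorem induced_map_is_projective_cover_and_kernel_lifts_syzygy
    (k : Type u) [Field k] (Λ : Type u) [Ring Λ] [Algebra k Λ] [FiniteDimensional k Λ]
    (R : Type u) [CommRing R] [Algebra k R] [IsLocalRing R] (hR : IsArtinianObjC k R)
    (V : Type u) [AddCommGroup V] [Module Λ V] [Module.Finite Λ V]
    -- α : P → V is a projective cover of V over Λ
    (P : Type u) [AddCommGroup P] [Module Λ P] [Module.Finite Λ P]
    (α : P →ₗ[Λ] V) (hα : IsProjectiveCover Λ α)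
    -- (M, φ) is a lift of V over R
    (L : Lift k Λ R V)
    -- P_R = R ⊗_k P is the corresponding projective lift of P over R
    (PR : Lift k Λ R P) (hPR : Module.Projective (R ⊗[k] Λ) PR.M)
    -- α_R : P_R → M lifts α through the augmentations
    (αR : PR.M →ₗ[R ⊗[k] Λ] L.M)
    (hαR : ∀ x : PR.M, L.π (αR x) = α (PR.π x)) :
    -- α_R is a projective cover of M over RΛ ...
    IsProjectiveCover (R ⊗[k] Λ) αR ∧
    -- ... whose kernel Ω_{RΛ}M is free over R ...
    Module.Free R ↥(LinearMap.ker αR) ∧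
    -- ... and is a lift of Ω_Λ V = ker α: it admits a Λ-equivariant surjection onto
    -- ker α with kernel 𝔪_R · ker α_R, i.e. k ⊗_R Ω_{RΛ}M ≅ Ω_Λ V
    ∃ ψ : ↥(LinearMap.ker αR) →+ ↥(LinearMap.ker α),
      (∀ (a : Λ) (u : ↥(LinearMap.ker αR)),
        ψ ⟨(Algebra.TensorProduct.includeRight (R := k) (A := R) (B := Λ) a :
              R ⊗[k] Λ) • (u : PR.M),
            Submodule.smul_mem _ _ u.2⟩ = a • ψ u) ∧
      Function.Surjective ψ ∧
      (∀ u, ψ u = 0 ↔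
        u ∈ (IsLocalRing.maximalIdeal R) • (⊤ : Submodule R ↥(LinearMap.ker αR))) := by
  classical
  obtain ⟨hart, -⟩ := hR
  haveI : IsArtinianRing R := hart
  have hnil : IsNilpotent (IsLocalRing.maximalIdeal R) := by
    have h := IsArtinianRing.isNilpotent_jacobson_bot (R := R)
    rwa [IsLocalRing.jacobson_eq_maximalIdeal ⊥ bot_ne_top] at h
  set 𝔪 := IsLocalRing.maximalIdeal R with h𝔪
  -- the R-linear version of αR
  set αR' : PR.M →ₗ[R] L.M := αR.restrictScalars R with hαR'
  -- surjectivity of αR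
  have hsurj : Function.Surjective αR := by
    have hsup : LinearMap.range αR' ⊔ 𝔪 • (⊤ : Submodule R L.M) = ⊤ := by
      rw [Submodule.eq_top_iff']
      intro m
      obtain ⟨p, hp⟩ := hα.surjective (L.π m)
      obtain ⟨x, hx⟩ := PR.surj p
      have hker : L.π (m - αR x) = 0 := by
        rw [map_sub, hαR, hx, hp, sub_self]
      have hm : m - αR x ∈ 𝔪 • (⊤ : Submodule R L.M) := (L.ker_eq _).mp hker
      have : m = αR x + (m - αR x) := by abel
      rw [this]
      exact Submodule.add_mem_sup ⟨x, rfl⟩ hm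
    have hrange := nakayama_nilpotent hnil hsup
    exact fun m => (LinearMap.range_eq_top.mp hrange) m
  -- superfluity of the kernel
  have hsmall : ∀ N : Submodule (R ⊗[k] Λ) PR.M, N ⊔ LinearMap.ker αR = ⊤ → N = ⊤ := by
    intro N hN
    set NΛ : Submodule Λ PR.M :=
      { carrier := N
        add_mem' := fun h1 h2 => N.add_mem h1 h2
        zero_mem' := N.zero_mem
        smul_mem' := fun a x hx => by
          show a • x ∈ N
          rw [PR.compatΛ]
          exact N.smul_mem _ hx } with hNΛ
    have himg : Submodule.map PR.π NΛ ⊔ LinearMap.ker α = ⊤ := by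
      rw [Submodule.eq_top_iff']
      intro p
      obtain ⟨x, hx⟩ := PR.surj p
      have hxN : x ∈ N ⊔ LinearMap.ker αR := hN.symm ▸ Submodule.mem_top
      obtain ⟨n, hn, w, hw, hnw⟩ := Submodule.mem_sup.mp hxN
      have hpw : α (PR.π w) = 0 := by
        rw [← hαR, LinearMap.mem_ker.mp hw, map_zero]
      have : p = PR.π n + PR.π w := by rw [← map_add, hnw, hx]
      rw [this]
      exact Submodule.add_mem_sup ⟨n, hn, rfl⟩ (LinearMap.mem_ker.mpr hpw)
    have hmap := hα.superfluous _ himg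
    have hsup : Submodule.restrictScalars R N ⊔ 𝔪 • (⊤ : Submodule R PR.M) = ⊤ := by
      rw [Submodule.eq_top_iff']
      intro x
      have hp : PR.π x ∈ Submodule.map PR.π NΛ := hmap.symm ▸ Submodule.mem_top
      obtain ⟨n, hn, hnx⟩ := hp
      have hker : PR.π (x - n) = 0 := by rw [map_sub, hnx, sub_self]
      have hx𝔪 := (PR.ker_eq _).mp hker
      have hxn : x = n + (x - n) := by abel
      rw [hxn]
      exact Submodule.add_mem_sup hn hx𝔪
    have := nakayama_nilpotent hnil hsup
    rwa [Submodule.restrictScalars_eq_top_iff] at this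
  -- an R-linear section of αR, and the induced retraction onto the kernel
  haveI := L.free
  haveI := PR.free
  haveI := PR.finite
  obtain ⟨s, hs⟩ := Module.projective_lifting_property αR' LinearMap.id hsurj
  have hsSec : ∀ m : L.M, αR' (s m) = m := fun m => LinearMap.congr_fun hs m
  have hmemK : ∀ x : PR.M, x - s (αR' x) ∈ LinearMap.ker αR := fun x => by
    rw [LinearMap.mem_ker]
    show αR' (x - s (αR' x)) = 0
    rw [map_sub, hsSec, sub_self]
  set f : PR.M →ₗ[R] ↥(LinearMap.ker αR) :=
    { toFun := fun x => ⟨x - s (αR' x), hmemK x⟩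
      map_add' := fun x y => Subtype.ext (by
        show (x + y) - s (αR' (x + y)) = ((⟨x - s (αR' x), hmemK x⟩ : ↥(LinearMap.ker αR)) +
          ⟨y - s (αR' y), hmemK y⟩ : ↥(LinearMap.ker αR)).1
        show (x + y) - s (αR' (x + y)) = (x - s (αR' x)) + (y - s (αR' y))
        rw [map_add, map_add]; abel)
      map_smul' := fun r x => Subtype.ext (by
        show (r • x) - s (αR' (r • x)) =
          ((r • (⟨x - s (αR' x), hmemK x⟩ : ↥(LinearMap.ker αR))) : ↥(LinearMap.ker αR)).1
        rw [SetLike.val_smul_of_tower, map_smul, map_smul, smul_sub]) } with hf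
  set ι : ↥(LinearMap.ker αR) →ₗ[R] PR.M :=
    { toFun := fun u => u.1
      map_add' := fun u v => rfl
      map_smul' := fun r u => rfl } with hι
  have hfι : ∀ u : ↥(LinearMap.ker αR), f u.1 = u := fun u => Subtype.ext (by
    show u.1 - s (αR' u.1) = u.1
    have h : αR' (u : PR.M) = 0 := (LinearMap.mem_ker (f := αR)).mp u.2
    rw [h, map_zero, sub_zero])
  -- freeness of the kernel over R
  have hproj : Module.Projective R ↥(LinearMap.ker αR) :=
    Module.Projective.of_split ι f (LinearMap.ext fun u => hfι u)
  haveI : Module.Finite R PR.M := Module.Finite.trans (R ⊗[k] Λ) PR.M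
  have hfsurj : Function.Surjective f := fun u => ⟨u.1, hfι u⟩
  haveI : Module.Finite R ↥(LinearMap.ker αR) := Module.Finite.of_surjective f hfsurj
  haveI := hproj
  haveI : Module.FinitePresentation R ↥(LinearMap.ker αR) :=
    Module.finitePresentation_of_projective R _
  have hfree : Module.Free R ↥(LinearMap.ker αR) := Module.free_of_flat_of_isLocalRing
  -- the map ψ
  have hπker : ∀ u : ↥(LinearMap.ker αR), α (PR.π u.1) = 0 := fun u => by
    rw [← hαR, LinearMap.mem_ker.mp u.2, map_zero]
  set ψ : ↥(LinearMap.ker αR) →+ ↥(LinearMap.ker α) :=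
    { toFun := fun u => ⟨PR.π u.1, LinearMap.mem_ker.mpr (hπker u)⟩
      map_zero' := Subtype.ext (by show PR.π (0 : PR.M) = 0; exact map_zero _)
      map_add' := fun u v => Subtype.ext (by
        show PR.π (u.1 + v.1) = PR.π u.1 + PR.π v.1
        exact map_add _ _ _) } with hψ
  refine ⟨⟨hPR, hsurj, hsmall⟩, hfree, ψ, ?_, ?_, ?_⟩
  · -- Λ-equivariance
    intro a u
    apply Subtype.ext
    show PR.π ((Algebra.TensorProduct.includeRight (R := k) (A := R) (B := Λ) a :
      R ⊗[k] Λ) • u.1) = ((a • ψ u : ↥(LinearMap.ker α)) : P)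
    rw [← PR.compatΛ a u.1, map_smul]
    rfl
  · -- surjectivity
    rintro ⟨p, hp⟩
    obtain ⟨x, hx⟩ := PR.surj p
    have h1 : L.π (αR x) = 0 := by rw [hαR, hx]; exact LinearMap.mem_ker.mp hp
    have h2 : αR x ∈ 𝔪 • (⊤ : Submodule R L.M) := (L.ker_eq _).mp h1
    have h3 : αR' x ∈ Submodule.map αR' (𝔪 • (⊤ : Submodule R PR.M)) := by
      rw [Submodule.map_smul'', Submodule.map_top,
        show LinearMap.range αR' = ⊤ from LinearMap.range_eq_top.mpr (fun m => hsurj m)]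
      exact h2
    obtain ⟨y, hy𝔪, hyx⟩ := h3
    refine ⟨⟨x - y, LinearMap.mem_ker.mpr ?_⟩, ?_⟩
    · show αR' (x - y) = 0
      rw [map_sub, hyx, sub_self]
    · apply Subtype.ext
      show PR.π (x - y) = p
      have hy0 : PR.π y = 0 := (PR.ker_eq _).mpr hy𝔪
      rw [map_sub, hx, hy0, sub_zero]
  · -- kernel
    intro u
    constructor
    · intro h0
      have hπ0 : PR.π u.1 = 0 := congrArg Subtype.val h0
      have hu𝔪 : u.1 ∈ 𝔪 • (⊤ : Submodule R PR.M) := (PR.ker_eq _).mp hπ0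
      have h1 : f u.1 ∈ Submodule.map f (𝔪 • (⊤ : Submodule R PR.M)) :=
        Submodule.mem_map_of_mem hu𝔪
      rw [Submodule.map_smul''] at h1
      have h2 : f u.1 ∈ 𝔪 • (⊤ : Submodule R ↥(LinearMap.ker αR)) :=
        (smul_mono_right 𝔪 (le_top : Submodule.map f ⊤ ≤ ⊤)) h1
      exact hfι u ▸ h2
    · intro hu
      apply Subtype.ext
      show PR.π u.1 = 0
      rw [PR.ker_eq]
      have h1 : ι u ∈ Submodule.map ι (𝔪 • (⊤ : Submodule R ↥(LinearMap.ker αR))) :=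
        Submodule.mem_map_of_mem hu
      rw [Submodule.map_smul''] at h1
      exact (smul_mono_right 𝔪 (le_top : Submodule.map ι ⊤ ≤ ⊤)) h1
end
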